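/- For any finite digraph D = (V, A) and any nonempty subset S ⊆ V, cn(D) ≥ max(δ⁺(D[S]), δ⁻(D[S])), where D[S] is the subdigraph of D induced by S and δ⁺ (respectively δ⁻) denotes the minimum out-degree (respectively minimum in-degree). Consequently cn(D) ≥ max over nonempty S ⊆ V of max(δ⁺(D[S]), δ⁻(D[S])). -/
import Mathlib


open scoped Classical

/-- The out-neighborhood of a set `S` in the digraph with arc relation `A`. -/
noncomputable def Nplus {V : Type} [Fintype V] (A : V → V → Prop) (S : Finset V) : Finset V :=
  Finset.univ.filter (fun y => ∃ x ∈ S, A x y)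

/-- The robber territories associated with a cop strategy `W` (0-indexed:
`terr A W i` is the paper's `R_{i+1}`). -/
noncomputable def terr {V : Type} [Fintype V] [DecidableEq V]
    (A : V → V → Prop) (W : ℕ → Finset V) : ℕ → Finset V
  | 0 => Finset.univ \ W 0
  | i + 1 => Nplus A (terr A W i) \ W (i + 1)

/-- A cop strategy uses at most `k` cops. -/
def UsesAtMost {V : Type} (W : ℕ → Finset V) (k : ℕ) : Prop :=
  ∀ i, (W i).card ≤ k

/-- The cop number: the least `k` admitting a winning strategy using `k` cops. -/
noncomputable def copNumber {V : Type} [Fintype V] [DecidableEq V] (A : V → V → Prop) : ℕ :=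
  sInf {k | ∃ W : ℕ → Finset V, UsesAtMost W k ∧ ∃ t, terr A W t = ∅}

lemma escape_out {V : Type} [Fintype V] [DecidableEq V] (A : V → V → Prop)
    (S : Finset V) (hS : S.Nonempty) (W : ℕ → Finset V) (k : ℕ) (hk : UsesAtMost W k)
    (h : ∀ x ∈ S, k < (S.filter (fun y => A x y)).card) :
    ∀ i, ((terr A W i) ∩ S).Nonempty := by
  have hScard : k < S.card := by
    obtain ⟨x0, hx0⟩ := hS
    exact lt_of_lt_of_le (h x0 hx0) (Finset.card_le_card (Finset.filter_subset _ _))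
  intro i
  induction i with
  | zero =>
    have hne : (S \ W 0).Nonempty := by
      rw [Finset.sdiff_nonempty]
      intro hsub
      exact absurd (le_trans (Finset.card_le_card hsub) (hk 0)) (not_le.mpr hScard)
    obtain ⟨x, hx⟩ := hne
    rw [Finset.mem_sdiff] at hx
    exact ⟨x, by simp [terr, hx.1, hx.2]⟩
  | succ i ih =>
    obtain ⟨x, hx⟩ := ih
    rw [Finset.mem_inter] at hx
    set T := S.filter (fun y => A x y) with hTdef
    have hne : (T \ W (i + 1)).Nonempty := by
      rw [Finset.sdiff_nonempty]
      intro hsub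
      exact absurd (le_trans (Finset.card_le_card hsub) (hk (i + 1)))
        (not_le.mpr (h x hx.2))
    obtain ⟨y, hy⟩ := hne
    rw [Finset.mem_sdiff, hTdef, Finset.mem_filter] at hy
    refine ⟨y, Finset.mem_inter.mpr ⟨?_, hy.1.1⟩⟩
    show y ∈ Nplus A (terr A W i) \ W (i + 1)
    rw [Finset.mem_sdiff]
    refine ⟨?_, hy.2⟩
    simp only [Nplus, Finset.mem_filter, Finset.mem_univ, true_and]
    exact ⟨x, hx.1, hy.1.2⟩

lemma escape_in {V : Type} [Fintype V] [DecidableEq V] (A : V → V → Prop)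
    (S : Finset V) (hS : S.Nonempty) (W : ℕ → Finset V) (k : ℕ) (hk : UsesAtMost W k)
    (h : ∀ x ∈ S, k < (S.filter (fun y => A y x)).card) :
    ∀ i, ((terr A W i) ∩ S).Nonempty := by
  have hScard : k < S.card := by
    obtain ⟨x0, hx0⟩ := hS
    exact lt_of_lt_of_le (h x0 hx0) (Finset.card_le_card (Finset.filter_subset _ _))
  have key : ∀ i, S \ terr A W i ⊆ W i := by
    intro i
    induction i with
    | zero =>
      intro y hy
      rw [Finset.mem_sdiff] at hy
      by_contra hw
      exact hy.2 (by simp [terr, hw])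
    | succ i ih =>
      intro y hy
      rw [Finset.mem_sdiff] at hy
      by_contra hw
      have hyN : y ∉ Nplus A (terr A W i) := by
        intro hyN
        exact hy.2 (by show y ∈ Nplus A (terr A W i) \ W (i+1); simp [Finset.mem_sdiff, hyN, hw])
      have hsub : S.filter (fun x => A x y) ⊆ W i := by
        intro x hx
        rw [Finset.mem_filter] at hx
        apply ih
        rw [Finset.mem_sdiff]
        refine ⟨hx.1, fun hxt => hyN ?_⟩
        simp only [Nplus, Finset.mem_filter, Finset.mem_univ, true_and]
        exact ⟨x, hxt, hx.2⟩
      exact absurd (le_trans (Finset.card_le_card hsub) (hk i)) (not_le.mpr (h y hy.1))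
  intro i
  have hne : (S \ W i).Nonempty := by
    rw [Finset.sdiff_nonempty]
    intro hsub
    exact absurd (le_trans (Finset.card_le_card hsub) (hk i)) (not_le.mpr hScard)
  obtain ⟨y, hy⟩ := hne
  rw [Finset.mem_sdiff] at hy
  refine ⟨y, Finset.mem_inter.mpr ⟨?_, hy.1⟩⟩
  by_contra ht
  exact hy.2 (key i (Finset.mem_sdiff.mpr ⟨hy.1, ht⟩))

theorem copNumber_ge_max_min_degrees {V : Type} [Fintype V] [DecidableEq V]
    (A : V → V → Prop) (S : Finset V) (hS : S.Nonempty) :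
    max (S.inf' hS (fun x => (S.filter (fun y => A x y)).card))
        (S.inf' hS (fun x => (S.filter (fun y => A y x)).card)) ≤ copNumber A := by
  have hbound : ∀ k ∈ {k | ∃ W : ℕ → Finset V, UsesAtMost W k ∧ ∃ t, terr A W t = ∅},
      max (S.inf' hS (fun x => (S.filter (fun y => A x y)).card))
        (S.inf' hS (fun x => (S.filter (fun y => A y x)).card)) ≤ k := by
    rintro k ⟨W, hW, t, ht⟩
    rw [max_le_iff]
    constructor
    · by_contra hlt
      rw [not_le] at hlt
      have h : ∀ x ∈ S, k < (S.filter (fun y => A x y)).card := fun x hx =>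
        lt_of_lt_of_le hlt (Finset.inf'_le _ hx)
      obtain ⟨y, hy⟩ := escape_out A S hS W k hW h t
      rw [ht] at hy
      simp at hy
    · by_contra hlt
      rw [not_le] at hlt
      have h : ∀ x ∈ S, k < (S.filter (fun y => A y x)).card := fun x hx =>
        lt_of_lt_of_le hlt (Finset.inf'_le _ hx)
      obtain ⟨y, hy⟩ := escape_in A S hS W k hW h t
      rw [ht] at hy
      simp at hy
  have hnonempty : {k | ∃ W : ℕ → Finset V, UsesAtMost W k ∧ ∃ t, terr A W t = ∅}.Nonempty := by
    refine ⟨Fintype.card V, fun _ => Finset.univ, fun i => by simp, 0, ?_⟩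
    simp [terr]
  exact le_csInf hnonempty hbound
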